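/- There exists an absolute constant c > 0 with the following property. Let A be a symmetric n×n matrix with σ_{k+1}(A) ≤ σ_k(A)/4, and let E be a symmetric matrix with ‖E‖_F < σ_k(A)/4. Then ‖P_k(A+E) − P_k(A)‖_F ≤ c·(√k·‖E‖₂ + ‖E‖_F), where P_k denotes the best rank-k approximation. -/

import Mathlib

open Matrix

noncomputable def frobNorm {m n : ℕ} (A : Matrix (Fin m) (Fin n) ℝ) : ℝ :=
  Real.sqrt (∑ i, ∑ j, (A i j) ^ 2)

noncomputable def opNorm {n : ℕ} (A : Matrix (Fin n) (Fin n) ℝ) : ℝ :=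
  ‖Matrix.toEuclideanCLM (𝕜 := ℝ) A‖

namespace Stmt5Aux

open Matrix Finset

variable {n : ℕ}

/-- Euclidean norm of a plain vector. -/
noncomputable def nrm {n : ℕ} (v : Fin n → ℝ) : ℝ := Real.sqrt (∑ i, v i ^ 2)

lemma nrm_nonneg (v : Fin n → ℝ) : 0 ≤ nrm v := Real.sqrt_nonneg _

lemma nrm_sq (v : Fin n → ℝ) : nrm v ^ 2 = ∑ i, v i ^ 2 :=
  Real.sq_sqrt (by positivity)

lemma nrm_eq_norm (v : Fin n → ℝ) :
    nrm v = ‖((WithLp.equiv 2 (Fin n → ℝ)).symm v : EuclideanSpace ℝ (Fin n))‖ := by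
  rw [EuclideanSpace.norm_eq]
  unfold nrm
  congr 1
  refine Finset.sum_congr rfl fun i _ => ?_
  rw [WithLp.equiv_symm_apply, WithLp.ofLp_toLp, Real.norm_eq_abs, sq_abs]

lemma nrm_sub_le (u v : Fin n → ℝ) : nrm (u - v) ≤ nrm u + nrm v := by
  rw [nrm_eq_norm, nrm_eq_norm, nrm_eq_norm, WithLp.equiv_symm_apply, WithLp.toLp_sub]
  exact norm_sub_le _ _

lemma nrm_add_le (u v : Fin n → ℝ) : nrm (u + v) ≤ nrm u + nrm v := by
  rw [nrm_eq_norm, nrm_eq_norm, nrm_eq_norm, WithLp.equiv_symm_apply, WithLp.toLp_add]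
  exact norm_add_le _ _

lemma nrm_le_mul_nrm {u v : Fin n → ℝ} {a : ℝ} (ha : 0 ≤ a)
    (h : ∀ i, |u i| ≤ a * |v i|) : nrm u ≤ a * nrm v := by
  unfold nrm
  rw [← Real.sqrt_sq ha, ← Real.sqrt_mul (by positivity), Finset.mul_sum]
  apply Real.sqrt_le_sqrt
  refine Finset.sum_le_sum fun i _ => ?_
  have h2 := pow_le_pow_left₀ (abs_nonneg (u i)) (h i) 2
  rw [sq_abs, mul_pow, sq_abs] at h2
  exact h2

lemma mul_nrm_le_nrm {u v : Fin n → ℝ} {a : ℝ} (ha : 0 ≤ a)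
    (h : ∀ i, a * |v i| ≤ |u i|) : a * nrm v ≤ nrm u := by
  unfold nrm
  rw [← Real.sqrt_sq ha, ← Real.sqrt_mul (by positivity), Finset.mul_sum]
  apply Real.sqrt_le_sqrt
  refine Finset.sum_le_sum fun i _ => ?_
  have h2 := pow_le_pow_left₀ (by positivity) (h i) 2
  rw [sq_abs, mul_pow, sq_abs] at h2
  exact h2

lemma nrm_pos {v : Fin n → ℝ} (h : v ≠ 0) : 0 < nrm v := by
  unfold nrm
  rw [Real.sqrt_pos]
  obtain ⟨i, hi⟩ := Function.ne_iff.mp h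
  have h1 : 0 < v i ^ 2 := by
    have : v i ≠ 0 := hi
    positivity
  exact lt_of_lt_of_le h1 (Finset.single_le_sum (fun j _ => sq_nonneg (v j)) (Finset.mem_univ i))

lemma orth_sumsq {Q : Matrix (Fin n) (Fin n) ℝ} (hQ : Qᵀ * Q = 1) (v : Fin n → ℝ) :
    ∑ i, (Q.mulVec v i) ^ 2 = ∑ i, v i ^ 2 := by
  have h1 : ∀ w : Fin n → ℝ, ∑ i, w i ^ 2 = w ⬝ᵥ w := by
    intro w; simp [dotProduct, sq]
  rw [h1, h1, dotProduct_mulVec, ← mulVec_transpose, mulVec_mulVec, hQ, one_mulVec]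

lemma orth_nrm {Q : Matrix (Fin n) (Fin n) ℝ} (hQ : Qᵀ * Q = 1) (v : Fin n → ℝ) :
    nrm (Q.mulVec v) = nrm v := by
  unfold nrm; rw [orth_sumsq hQ]

lemma sumsq_transpose (X : Matrix (Fin n) (Fin n) ℝ) :
    ∑ i, ∑ j, (Xᵀ i j) ^ 2 = ∑ i, ∑ j, (X i j) ^ 2 := by
  rw [Finset.sum_comm]
  rfl

lemma sumsq_mul_left {Q X : Matrix (Fin n) (Fin n) ℝ} (hQ : Qᵀ * Q = 1) :
    ∑ i, ∑ j, ((Q * X) i j) ^ 2 = ∑ i, ∑ j, (X i j) ^ 2 := by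
  calc ∑ i, ∑ j, ((Q * X) i j) ^ 2 = ∑ j, ∑ i, ((Q * X) i j) ^ 2 := Finset.sum_comm
    _ = ∑ j, ∑ i, (X i j) ^ 2 := by
        refine Finset.sum_congr rfl fun j _ => ?_
        have h : ∀ i, (Q * X) i j = Q.mulVec (fun l => X l j) i := by
          intro i; simp [mul_apply, mulVec, dotProduct]
        simp_rw [h]
        exact orth_sumsq hQ _
    _ = ∑ i, ∑ j, (X i j) ^ 2 := Finset.sum_comm

lemma sumsq_mul_right {X V : Matrix (Fin n) (Fin n) ℝ} (hV : Vᵀ * V = 1) :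
    ∑ i, ∑ j, ((X * V) i j) ^ 2 = ∑ i, ∑ j, (X i j) ^ 2 := by
  have hQ : Vᵀᵀ * Vᵀ = 1 := by
    rw [transpose_transpose]; exact mul_eq_one_comm.mp hV
  calc ∑ i, ∑ j, ((X * V) i j) ^ 2 = ∑ i, ∑ j, ((X * V)ᵀ i j) ^ 2 := (sumsq_transpose _).symm
    _ = ∑ i, ∑ j, ((Vᵀ * Xᵀ) i j) ^ 2 := by rw [transpose_mul]
    _ = ∑ i, ∑ j, (Xᵀ i j) ^ 2 := sumsq_mul_left hQ
    _ = ∑ i, ∑ j, (X i j) ^ 2 := sumsq_transpose _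

lemma sumsq_conj {U V X : Matrix (Fin n) (Fin n) ℝ} (hUU : U * Uᵀ = 1) (hV : Vᵀ * V = 1) :
    ∑ i, ∑ j, ((Uᵀ * X * V) i j) ^ 2 = ∑ i, ∑ j, (X i j) ^ 2 := by
  have hQ : Uᵀᵀ * Uᵀ = 1 := by rw [transpose_transpose]; exact hUU
  rw [sumsq_mul_right hV, sumsq_mul_left hQ]

lemma nrm_mulVec_le (E : Matrix (Fin n) (Fin n) ℝ) (x : Fin n → ℝ) :
    nrm (E.mulVec x) ≤ opNorm E * nrm x := by
  rw [nrm_eq_norm, nrm_eq_norm]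
  have h := (Matrix.toEuclideanCLM (𝕜 := ℝ) E).le_opNorm ((WithLp.equiv 2 (Fin n → ℝ)).symm x)
  rw [WithLp.equiv_symm_apply, Matrix.toEuclideanCLM_toLp] at h
  exact h

lemma opNorm_le_frobNorm (E : Matrix (Fin n) (Fin n) ℝ) : opNorm E ≤ frobNorm E := by
  have key : ∀ v : Fin n → ℝ, nrm (E.mulVec v) ≤ frobNorm E * nrm v := by
    intro v
    unfold nrm frobNorm
    rw [← Real.sqrt_mul (by positivity)]
    apply Real.sqrt_le_sqrt
    rw [Finset.sum_mul]
    refine Finset.sum_le_sum fun i _ => ?_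
    have hcs := Finset.sum_mul_sq_le_sq_mul_sq Finset.univ (fun j => E i j) v
    have h1 : E.mulVec v i = ∑ j, E i j * v j := by simp [mulVec, dotProduct]
    rw [h1]
    exact le_trans hcs (by rw [Finset.sum_mul])
  show ‖Matrix.toEuclideanCLM (𝕜 := ℝ) E‖ ≤ frobNorm E
  apply ContinuousLinearMap.opNorm_le_bound _ (Real.sqrt_nonneg _)
  intro x
  have hx : x = (WithLp.equiv 2 (Fin n → ℝ)).symm (WithLp.equiv 2 (Fin n → ℝ) x) :=
    (Equiv.symm_apply_apply _ x).symm
  rw [hx, WithLp.equiv_symm_apply, Matrix.toEuclideanCLM_toLp, ← WithLp.equiv_symm_apply, ← nrm_eq_norm, ← nrm_eq_norm]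
  exact key _

lemma opNorm_nonneg (E : Matrix (Fin n) (Fin n) ℝ) : 0 ≤ opNorm E := norm_nonneg _

lemma exists_null (N : Matrix (Fin n) (Fin n) ℝ) (i0 : Fin n) (h : ∀ j, N i0 j = 0) :
    ∃ c, c ≠ 0 ∧ N.mulVec c = 0 := by
  obtain ⟨v, hv, hv2⟩ :=
    (Matrix.exists_mulVec_eq_zero_iff).mpr (Matrix.det_eq_zero_of_row_eq_zero i0 h)
  exact ⟨v, hv, hv2⟩

lemma conj_eq {U V : Matrix (Fin n) (Fin n) ℝ} (hU : Uᵀ * U = 1) (hV : Vᵀ * V = 1)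
    (f g : Fin n → ℝ) :
    Uᵀ * (V * Matrix.diagonal f * Vᵀ - U * Matrix.diagonal g * Uᵀ) * V
      = (Uᵀ * V) * Matrix.diagonal f - Matrix.diagonal g * (Uᵀ * V) := by
  have h1 : Uᵀ * (V * Matrix.diagonal f * Vᵀ) * V
      = Uᵀ * V * Matrix.diagonal f * (Vᵀ * V) := by noncomm_ring
  have h2 : Uᵀ * (U * Matrix.diagonal g * Uᵀ) * V
      = Uᵀ * U * Matrix.diagonal g * (Uᵀ * V) := by noncomm_ring
  rw [mul_sub, sub_mul, h1, h2, hV, hU, Matrix.mul_one, Matrix.one_mul]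

lemma indicator_sum_le {k : ℕ} (hk1 : 1 ≤ k) (a : ℝ) (ha : 0 ≤ a) :
    ∑ j : Fin n, (if (j : ℕ) < k then a else 0) ≤ k * a := by
  classical
  rw [Finset.sum_ite, Finset.sum_const, Finset.sum_const_zero, add_zero]
  have hcard : (Finset.univ.filter fun j : Fin n => (j : ℕ) < k).card ≤ k := by
    have h := Finset.card_le_card_of_injOn
      (s := Finset.univ.filter fun j : Fin n => (j : ℕ) < k)
      (t := (Finset.univ : Finset (Fin k)))
      (fun j : Fin n => (⟨min (j : ℕ) (k - 1), by omega⟩ : Fin k))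
      (fun a _ => Finset.mem_univ _) ?_
    · simpa using h
    · intro x hx y hy hxy
      simp only [Finset.coe_filter, Set.mem_setOf_eq, Finset.mem_univ, true_and] at hx hy
      have h1 : min (x : ℕ) (k - 1) = min (y : ℕ) (k - 1) := congrArg Fin.val hxy
      have : (x : ℕ) = (y : ℕ) := by omega
      exact Fin.ext this
  rw [nsmul_eq_mul]
  have : ((Finset.univ.filter fun j : Fin n => (j : ℕ) < k).card : ℝ) ≤ (k : ℝ) := by
    exact_mod_cast hcard
  exact mul_le_mul_of_nonneg_right this ha

end Stmt5Aux

open Stmt5Aux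

set_option maxHeartbeats 2000000 in
/-- Davis–Kahan extension: there is an absolute constant `c > 0` such that for any
symmetric `A` with `σ_{k+1}(A) ≤ σ_k(A)/4` and any symmetric `E` with
`‖E‖_F < σ_k(A)/4`, the best rank-`k` approximations (truncated eigendecompositions
keeping the `k` largest-magnitude eigenvalues) satisfy
`‖P_k(A+E) − P_k(A)‖_F ≤ c (√k ‖E‖₂ + ‖E‖_F)`. -/
theorem stmt5 :
    ∃ c : ℝ, 0 < c ∧
      ∀ (n k : ℕ) (hk1 : 1 ≤ k) (hkn : k < n)
        (A E VA VB : Matrix (Fin n) (Fin n) ℝ) (α β : Fin n → ℝ),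
        A.IsSymm → E.IsSymm →
        VAᵀ * VA = 1 → A = VA * Matrix.diagonal α * VAᵀ →
        Antitone (fun i => |α i|) →
        VBᵀ * VB = 1 → A + E = VB * Matrix.diagonal β * VBᵀ →
        Antitone (fun i => |β i|) →
        |α ⟨k, hkn⟩| ≤ |α ⟨k - 1, by omega⟩| / 4 →
        frobNorm E < |α ⟨k - 1, by omega⟩| / 4 →
        frobNorm
            (VB * Matrix.diagonal (fun i : Fin n => if i.1 < k then β i else 0) * VBᵀ -
              VA * Matrix.diagonal (fun i : Fin n => if i.1 < k then α i else 0) * VAᵀ)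
          ≤ c * (Real.sqrt k * opNorm E + frobNorm E) := by
  classical
  refine ⟨3, by norm_num, ?_⟩
  intro n k hk1 hkn A E U V α β hAsym hEsym hU hA hα hV hB hβ hgap hEs
  set kp : Fin n := ⟨k, hkn⟩ with hkp
  set km : Fin n := ⟨k - 1, by omega⟩ with hkm
  set s := |α km| with hs
  have hopfrob : opNorm E ≤ frobNorm E := opNorm_le_frobNorm E
  have hfE0 : 0 ≤ frobNorm E := Real.sqrt_nonneg _
  have hop0 : 0 ≤ opNorm E := opNorm_nonneg E
  have hs0 : 0 < s := by
    have := hEs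
    linarith
  have hopE : opNorm E < s / 4 := by
    have := hEs
    linarith
  have hUU : U * Uᵀ = 1 := mul_eq_one_comm.mp hU
  have hVV : V * Vᵀ = 1 := mul_eq_one_comm.mp hV
  set W := Uᵀ * V with hWdef
  have hWo : Wᵀ * W = 1 := by
    rw [hWdef, transpose_mul, transpose_transpose]
    have h1 : Vᵀ * U * (Uᵀ * V) = Vᵀ * (U * Uᵀ) * V := by noncomm_ring
    rw [h1, hUU, Matrix.mul_one, hV]
  set F := Uᵀ * E * V with hFdef
  have hEdec : E = V * Matrix.diagonal β * Vᵀ - U * Matrix.diagonal α * Uᵀ := by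
    rw [← hB, ← hA]; abel
  have hF : F = W * Matrix.diagonal β - Matrix.diagonal α * W := by
    rw [hFdef, hEdec, conj_eq hU hV, hWdef]
  -- eigenvalue bounds for α
  have hαlow : ∀ i : Fin n, (i : ℕ) < k → s ≤ |α i| := by
    intro i hi
    exact hα (show i ≤ km by rw [Fin.le_def]; show (i : ℕ) ≤ k - 1; omega)
  have hαhigh : ∀ i : Fin n, k ≤ (i : ℕ) → |α i| ≤ s / 4 := by
    intro i hi
    have h1 : |α i| ≤ |α kp| := hα (show kp ≤ i by rw [Fin.le_def]; show k ≤ (i : ℕ); omega)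
    have h2 : |α kp| ≤ s / 4 := by rw [hs, hkm, hkp]; exact hgap
    linarith
  -- common Sylvester machinery
  have hFc : ∀ c : Fin n → ℝ, nrm (F.mulVec c) ≤ opNorm E * nrm c := by
    intro c
    have h1 : F.mulVec c = Uᵀ.mulVec (E.mulVec (V.mulVec c)) := by
      rw [hFdef, mulVec_mulVec, mulVec_mulVec]
    have hUt : Uᵀᵀ * Uᵀ = 1 := by rw [transpose_transpose]; exact hUU
    rw [h1, orth_nrm hUt]
    calc nrm (E.mulVec (V.mulVec c)) ≤ opNorm E * nrm (V.mulVec c) := nrm_mulVec_le _ _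
      _ = opNorm E * nrm c := by rw [orth_nrm hV]
  have hqp : ∀ c : Fin n → ℝ,
      W.mulVec (fun j => β j * c j) - (fun i => α i * (W.mulVec c) i) = F.mulVec c := by
    intro c
    funext i
    have hFi : (F *ᵥ c) i = ∑ j, (W i j * β j - α i * W i j) * c j := by
      rw [hF]
      simp [mulVec, dotProduct, Matrix.sub_apply, Matrix.mul_diagonal, Matrix.diagonal_mul]
    simp only [Pi.sub_apply]
    rw [hFi]
    simp only [mulVec, dotProduct, Finset.mul_sum]
    rw [← Finset.sum_sub_distrib]
    refine Finset.sum_congr rfl fun j _ => by ring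
  -- Weyl part A : lower bound on |β j| for j < k
  have hβA : ∀ j : Fin n, (j : ℕ) < k → 3 * s / 4 ≤ |β j| := by
    have hkey : 3 * s / 4 ≤ |β km| := by
      set N : Matrix (Fin n) (Fin n) ℝ := Matrix.of (fun i j =>
        if (i : ℕ) < k - 1 then (if i = j then (1 : ℝ) else 0)
        else if (i : ℕ) < k then 0 else W i j) with hN
      obtain ⟨c, hc0, hcN⟩ := exists_null N km (by
        intro j
        have hval : ((km : Fin n) : ℕ) = k - 1 := rfl
        simp [hN, Matrix.of_apply, hval, (by omega : k - 1 < k)])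
      set d := W.mulVec c with hd
      have hrow : ∀ i : Fin n, (N.mulVec c) i = 0 := fun i => congrFun hcN i
      have hcsupp : ∀ j : Fin n, (j : ℕ) < k - 1 → c j = 0 := by
        intro j hj
        have := hrow j
        simp only [mulVec, dotProduct, hN, Matrix.of_apply, if_pos hj] at this
        simpa using this
      have hdsupp : ∀ i : Fin n, k ≤ (i : ℕ) → d i = 0 := by
        intro i hi
        have := hrow i
        simp only [mulVec, dotProduct, hN, Matrix.of_apply, if_neg (by omega : ¬ (i:ℕ) < k - 1),
          if_neg (by omega : ¬ (i:ℕ) < k)] at this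
        simpa [hd, mulVec, dotProduct] using this
      set q : Fin n → ℝ := fun j => β j * c j with hq
      set p : Fin n → ℝ := fun i => α i * d i with hp
      have h1 : s * nrm c ≤ nrm p := by
        have hdc : nrm d = nrm c := orth_nrm hWo c
        rw [← hdc]
        refine mul_nrm_le_nrm (le_of_lt hs0) fun i => ?_
        by_cases hik : (i : ℕ) < k
        · rw [hp, abs_mul]
          exact mul_le_mul_of_nonneg_right (hαlow i hik) (abs_nonneg _)
        · rw [hdsupp i (by omega)]
          simp [hp, hdsupp i (by omega)]
      have h2 : nrm p ≤ nrm (W.mulVec q) + nrm (F.mulVec c) := by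
        have : p = W.mulVec q - F.mulVec c := by
          rw [← hqp c]; funext i; simp [hp, hd, hq]
        rw [this]
        exact nrm_sub_le _ _
      have h3 : nrm (W.mulVec q) ≤ |β km| * nrm c := by
        rw [orth_nrm hWo]
        refine nrm_le_mul_nrm (abs_nonneg _) fun j => ?_
        by_cases hj : (j : ℕ) < k - 1
        · simp [hq, hcsupp j hj]
        · rw [hq, abs_mul]
          refine mul_le_mul_of_nonneg_right ?_ (abs_nonneg _)
          exact hβ (show km ≤ j by rw [Fin.le_def]; show k - 1 ≤ (j : ℕ); omega)
      have h4 := hFc c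
      have hcpos : 0 < nrm c := nrm_pos hc0
      have : s * nrm c ≤ (|β km| + opNorm E) * nrm c := by
        calc s * nrm c ≤ nrm p := h1
          _ ≤ nrm (W.mulVec q) + nrm (F.mulVec c) := h2
          _ ≤ |β km| * nrm c + opNorm E * nrm c := add_le_add h3 h4
          _ = (|β km| + opNorm E) * nrm c := by ring
      have h5 : s ≤ |β km| + opNorm E := le_of_mul_le_mul_right this hcpos
      linarith
    intro j hj
    have : |β km| ≤ |β j| := hβ (show j ≤ km by rw [Fin.le_def]; show (j : ℕ) ≤ k - 1; omega)
    linarith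
  -- Weyl part B : upper bound on |β j| for j ≥ k
  have hβB : ∀ j : Fin n, k ≤ (j : ℕ) → |β j| ≤ s / 2 := by
    have hkey : |β kp| ≤ s / 2 := by
      set N : Matrix (Fin n) (Fin n) ℝ := Matrix.of (fun i j =>
        if (i : ℕ) < k then W i j
        else if (i : ℕ) = k then 0 else (if i = j then (1 : ℝ) else 0)) with hN
      obtain ⟨c, hc0, hcN⟩ := exists_null N kp (by
        intro j
        have hval : ((kp : Fin n) : ℕ) = k := rfl
        simp [hN, Matrix.of_apply, hval])
      set d := W.mulVec c with hd
      have hrow : ∀ i : Fin n, (N.mulVec c) i = 0 := fun i => congrFun hcN i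
      have hcsupp : ∀ j : Fin n, k < (j : ℕ) → c j = 0 := by
        intro j hj
        have := hrow j
        simp only [mulVec, dotProduct, hN, Matrix.of_apply, if_neg (by omega : ¬ (j:ℕ) < k),
          if_neg (by omega : ¬ (j:ℕ) = k)] at this
        simpa using this
      have hdsupp : ∀ i : Fin n, (i : ℕ) < k → d i = 0 := by
        intro i hi
        have := hrow i
        simp only [mulVec, dotProduct, hN, Matrix.of_apply, if_pos hi] at this
        simpa [hd, mulVec, dotProduct] using this
      set q : Fin n → ℝ := fun j => β j * c j with hq
      set p : Fin n → ℝ := fun i => α i * d i with hp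
      have h1 : |β kp| * nrm c ≤ nrm q := by
        refine mul_nrm_le_nrm (abs_nonneg _) fun j => ?_
        by_cases hj : k < (j : ℕ)
        · simp [hq, hcsupp j hj]
        · rw [hq, abs_mul]
          refine mul_le_mul_of_nonneg_right ?_ (abs_nonneg _)
          exact hβ (show j ≤ kp by rw [Fin.le_def]; show (j : ℕ) ≤ k; omega)
      have h2 : nrm q ≤ nrm p + nrm (F.mulVec c) := by
        have hWq : W.mulVec q = p + F.mulVec c := by
          rw [← hqp c]; funext i; simp [hp, hd, hq]
        calc nrm q = nrm (W.mulVec q) := (orth_nrm hWo q).symm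
          _ = nrm (p + F.mulVec c) := by rw [hWq]
          _ ≤ nrm p + nrm (F.mulVec c) := nrm_add_le _ _
      have h3 : nrm p ≤ (s / 4) * nrm d := by
        refine nrm_le_mul_nrm (by linarith) fun i => ?_
        by_cases hik : (i : ℕ) < k
        · simp [hp, hdsupp i hik]
        · rw [hp, abs_mul]
          exact mul_le_mul_of_nonneg_right (hαhigh i (by omega)) (abs_nonneg _)
      have h4 := hFc c
      have hcpos : 0 < nrm c := nrm_pos hc0
      have hdc : nrm d = nrm c := orth_nrm hWo c
      have : |β kp| * nrm c ≤ (s / 4 + opNorm E) * nrm c := by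
        calc |β kp| * nrm c ≤ nrm q := h1
          _ ≤ nrm p + nrm (F.mulVec c) := h2
          _ ≤ (s / 4) * nrm d + opNorm E * nrm c := add_le_add h3 h4
          _ = (s / 4 + opNorm E) * nrm c := by rw [hdc]; ring
      have h5 : |β kp| ≤ s / 4 + opNorm E := le_of_mul_le_mul_right this hcpos
      linarith
    intro j hj
    have : |β j| ≤ |β kp| := hβ (show kp ≤ j by rw [Fin.le_def]; show k ≤ (j : ℕ); omega)
    linarith
  -- the main estimate
  set βχ : Fin n → ℝ := fun j => if (j : ℕ) < k then β j else 0 with hβχ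
  set αχ : Fin n → ℝ := fun i => if (i : ℕ) < k then α i else 0 with hαχ
  set T := V * Matrix.diagonal βχ * Vᵀ - U * Matrix.diagonal αχ * Uᵀ with hT
  set M := W * Matrix.diagonal βχ - Matrix.diagonal αχ * W with hM
  have hMT : Uᵀ * T * V = M := by rw [hT, conj_eq hU hV, hM, hWdef]
  have hfrobT : frobNorm T = Real.sqrt (∑ i, ∑ j, (M i j) ^ 2) := by
    unfold frobNorm
    congr 1
    rw [← hMT]
    exact (sumsq_conj hUU hV).symm
  -- entrywise bound
  have hMF : ∀ i j, (M i j) ^ 2 ≤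
      4 * ((if (j : ℕ) < k then (F i j) ^ 2 else 0) + (if (i : ℕ) < k then (F i j) ^ 2 else 0)) := by
    intro i j
    have hMij : M i j = W i j * βχ j - αχ i * W i j := by
      rw [hM]; simp [Matrix.sub_apply, Matrix.mul_diagonal, Matrix.diagonal_mul]
    have hFij : F i j = W i j * (β j - α i) := by
      rw [hF]; simp [Matrix.sub_apply, Matrix.mul_diagonal, Matrix.diagonal_mul]; ring
    by_cases hj : (j : ℕ) < k <;> by_cases hi : (i : ℕ) < k
    · have hMeq : M i j = F i j := by
        rw [hMij, hFij, hβχ, hαχ]; simp only [if_pos hj, if_pos hi]; ring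
      rw [hMeq, if_pos hj, if_pos hi]
      nlinarith [sq_nonneg (F i j)]
    · -- j < k, i ≥ k
      have h1 : M i j = W i j * β j := by
        rw [hMij, hβχ, hαχ]; simp only [if_pos hj, if_neg hi]; ring
      have hb := hβA j hj
      have ha := hαhigh i (by omega)
      have habs : |β j| - |α i| ≤ |β j - α i| := abs_sub_abs_le_abs_sub _ _
      have h2 : |β j| / 2 ≤ |β j - α i| := by linarith
      have h3 : (β j) ^ 2 ≤ 4 * (β j - α i) ^ 2 := by
        nlinarith [sq_abs (β j), sq_abs (β j - α i), abs_nonneg (β j), abs_nonneg (β j - α i)]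
      have h4 : (M i j) ^ 2 ≤ 4 * (F i j) ^ 2 := by
        rw [h1, hFij, mul_pow, mul_pow]
        nlinarith [sq_nonneg (W i j)]
      rw [if_pos hj, if_neg hi]
      linarith [sq_nonneg (F i j)]
    · -- j ≥ k, i < k
      have h1 : M i j = -(α i * W i j) := by
        rw [hMij, hβχ, hαχ]; simp only [if_neg hj, if_pos hi]; ring
      have hb := hβB j (by omega)
      have ha := hαlow i hi
      have habs : |α i| - |β j| ≤ |α i - β j| := abs_sub_abs_le_abs_sub _ _
      have h2 : |α i| / 2 ≤ |β j - α i| := by rw [abs_sub_comm]; linarith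
      have h3 : (α i) ^ 2 ≤ 4 * (β j - α i) ^ 2 := by
        nlinarith [sq_abs (α i), sq_abs (β j - α i), abs_nonneg (α i), abs_nonneg (β j - α i)]
      have h4 : (M i j) ^ 2 ≤ 4 * (F i j) ^ 2 := by
        rw [h1, hFij, neg_pow, mul_pow, mul_pow]
        nlinarith [sq_nonneg (W i j)]
      rw [if_neg hj, if_pos hi]
      linarith [sq_nonneg (F i j)]
    · have h1 : M i j = 0 := by
        rw [hMij, hβχ, hαχ]; simp only [if_neg hj, if_neg hi]; ring
      rw [h1, if_neg hj, if_neg hi]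
      norm_num
  -- column and row bounds
  have colb : ∀ j : Fin n, ∑ i, (F i j) ^ 2 ≤ opNorm E ^ 2 := by
    intro j
    have hcol : ∀ i, F i j = Uᵀ.mulVec (E.mulVec (fun l => V l j)) i := by
      intro i
      rw [hFdef]
      simp [Matrix.mul_apply, mulVec, dotProduct, Finset.mul_sum, Finset.sum_mul]
      rw [Finset.sum_comm]
      refine Finset.sum_congr rfl fun l _ => ?_
      refine Finset.sum_congr rfl fun m _ => ?_
      ring
    have hUt : Uᵀᵀ * Uᵀ = 1 := by rw [transpose_transpose]; exact hUU
    calc ∑ i, (F i j) ^ 2 = ∑ i, (Uᵀ.mulVec (E.mulVec (fun l => V l j)) i) ^ 2 := by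
          refine Finset.sum_congr rfl fun i _ => by rw [hcol i]
      _ = ∑ i, (E.mulVec (fun l => V l j) i) ^ 2 := orth_sumsq hUt _
      _ = nrm (E.mulVec (fun l => V l j)) ^ 2 := (nrm_sq _).symm
      _ ≤ (opNorm E * nrm (fun l => V l j)) ^ 2 := by
          refine pow_le_pow_left₀ (nrm_nonneg _) (nrm_mulVec_le _ _) 2
      _ = opNorm E ^ 2 := by
          have hv1 : nrm (fun l => V l j) = 1 := by
            have : ∑ l, (V l j) ^ 2 = 1 := by
              have := congrFun (congrFun hV j) j
              simp only [Matrix.mul_apply, Matrix.transpose_apply, Matrix.one_apply_eq] at this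
              rw [← this]
              exact Finset.sum_congr rfl fun l _ => (sq (V l j)) ▸ (pow_two (V l j))
            unfold nrm
            rw [this, Real.sqrt_one]
          rw [hv1, mul_one]
  have rowb : ∀ i : Fin n, ∑ j, (F i j) ^ 2 ≤ opNorm E ^ 2 := by
    intro i
    have hFT : Fᵀ = Vᵀ * E * U := by
      rw [hFdef, transpose_mul, transpose_mul, transpose_transpose, hEsym]
      noncomm_ring
    -- same column argument applied to Fᵀ
    have hcol : ∀ j, Fᵀ j i = Vᵀ.mulVec (E.mulVec (fun l => U l i)) j := by
      intro j
      rw [hFT]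
      simp [Matrix.mul_apply, mulVec, dotProduct, Finset.mul_sum, Finset.sum_mul]
      rw [Finset.sum_comm]
      refine Finset.sum_congr rfl fun l _ => ?_
      refine Finset.sum_congr rfl fun m _ => ?_
      ring
    have hVt : Vᵀᵀ * Vᵀ = 1 := by rw [transpose_transpose]; exact hVV
    calc ∑ j, (F i j) ^ 2 = ∑ j, (Vᵀ.mulVec (E.mulVec (fun l => U l i)) j) ^ 2 := by
          refine Finset.sum_congr rfl fun j _ => by rw [← Matrix.transpose_apply F j i, hcol j]
      _ = ∑ j, (E.mulVec (fun l => U l i) j) ^ 2 := orth_sumsq hVt _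
      _ = nrm (E.mulVec (fun l => U l i)) ^ 2 := (nrm_sq _).symm
      _ ≤ (opNorm E * nrm (fun l => U l i)) ^ 2 := by
          refine pow_le_pow_left₀ (nrm_nonneg _) (nrm_mulVec_le _ _) 2
      _ = opNorm E ^ 2 := by
          have hv1 : nrm (fun l => U l i) = 1 := by
            have : ∑ l, (U l i) ^ 2 = 1 := by
              have := congrFun (congrFun hU i) i
              simp only [Matrix.mul_apply, Matrix.transpose_apply, Matrix.one_apply_eq] at this
              rw [← this]
              exact Finset.sum_congr rfl fun l _ => (sq (U l i)) ▸ (pow_two (U l i))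
            unfold nrm
            rw [this, Real.sqrt_one]
          rw [hv1, mul_one]
  -- sum the entrywise bounds
  have hsum : ∑ i, ∑ j, (M i j) ^ 2 ≤ 8 * k * opNorm E ^ 2 := by
    have step1 : ∑ i, ∑ j, (M i j) ^ 2 ≤
        ∑ i : Fin n, ∑ j : Fin n, (4 * ((if (j : ℕ) < k then (F i j) ^ 2 else 0)
          + (if (i : ℕ) < k then (F i j) ^ 2 else 0))) := by
      refine Finset.sum_le_sum fun i _ => Finset.sum_le_sum fun j _ => hMF i j
    have step2 : ∑ i : Fin n, ∑ j : Fin n, (4 * ((if (j : ℕ) < k then (F i j) ^ 2 else 0)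
          + (if (i : ℕ) < k then (F i j) ^ 2 else 0)))
        = 4 * ((∑ i : Fin n, ∑ j : Fin n, (if (j : ℕ) < k then (F i j) ^ 2 else 0))
          + (∑ i : Fin n, ∑ j : Fin n, (if (i : ℕ) < k then (F i j) ^ 2 else 0))) := by
      simp only [mul_add, Finset.mul_sum, Finset.sum_add_distrib]
    have hcolsum : ∑ i : Fin n, ∑ j : Fin n, (if (j : ℕ) < k then (F i j) ^ 2 else 0)
        ≤ k * opNorm E ^ 2 := by
      rw [Finset.sum_comm]
      calc ∑ j : Fin n, ∑ i, (if (j : ℕ) < k then (F i j) ^ 2 else 0)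
          = ∑ j : Fin n, (if (j : ℕ) < k then (∑ i, (F i j) ^ 2) else 0) := by
            refine Finset.sum_congr rfl fun j _ => ?_
            by_cases hj : (j : ℕ) < k <;> simp [hj]
        _ ≤ ∑ j : Fin n, (if (j : ℕ) < k then opNorm E ^ 2 else 0) := by
            refine Finset.sum_le_sum fun j _ => ?_
            by_cases hj : (j : ℕ) < k <;> simp [hj, colb j]
        _ ≤ k * opNorm E ^ 2 := indicator_sum_le hk1 _ (by positivity)
    have hrowsum : ∑ i : Fin n, ∑ j : Fin n, (if (i : ℕ) < k then (F i j) ^ 2 else 0)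
        ≤ k * opNorm E ^ 2 := by
      calc ∑ i : Fin n, ∑ j, (if (i : ℕ) < k then (F i j) ^ 2 else 0)
          = ∑ i : Fin n, (if (i : ℕ) < k then (∑ j, (F i j) ^ 2) else 0) := by
            refine Finset.sum_congr rfl fun i _ => ?_
            by_cases hi : (i : ℕ) < k <;> simp [hi]
        _ ≤ ∑ i : Fin n, (if (i : ℕ) < k then opNorm E ^ 2 else 0) := by
            refine Finset.sum_le_sum fun i _ => ?_
            by_cases hi : (i : ℕ) < k <;> simp [hi, rowb i]
        _ ≤ k * opNorm E ^ 2 := indicator_sum_le hk1 _ (by positivity)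
    calc ∑ i, ∑ j, (M i j) ^ 2
        ≤ 4 * ((∑ i : Fin n, ∑ j : Fin n, (if (j : ℕ) < k then (F i j) ^ 2 else 0))
          + (∑ i : Fin n, ∑ j : Fin n, (if (i : ℕ) < k then (F i j) ^ 2 else 0))) := by rw [← step2]; exact step1
      _ ≤ 4 * (k * opNorm E ^ 2 + k * opNorm E ^ 2) := by
          have := add_le_add hcolsum hrowsum
          linarith
      _ = 8 * k * opNorm E ^ 2 := by ring
  -- finish
  have hfinal : frobNorm T ≤ 3 * (Real.sqrt k * opNorm E) := by
    rw [hfrobT]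
    have h1 : Real.sqrt (∑ i, ∑ j, (M i j) ^ 2) ≤ Real.sqrt (8 * k * opNorm E ^ 2) :=
      Real.sqrt_le_sqrt hsum
    have h2 : Real.sqrt (8 * k * opNorm E ^ 2) ≤ 3 * (Real.sqrt k * opNorm E) := by
      have hkey : (8 : ℝ) * k * opNorm E ^ 2 ≤ (3 * (Real.sqrt k * opNorm E)) ^ 2 := by
        have hsq : Real.sqrt k ^ 2 = (k : ℝ) := Real.sq_sqrt (Nat.cast_nonneg k)
        nlinarith [sq_nonneg (opNorm E), Nat.cast_nonneg (α := ℝ) k]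
      calc Real.sqrt (8 * k * opNorm E ^ 2)
          ≤ Real.sqrt ((3 * (Real.sqrt k * opNorm E)) ^ 2) := Real.sqrt_le_sqrt hkey
        _ = 3 * (Real.sqrt k * opNorm E) := Real.sqrt_sq (by positivity)
    linarith
  calc frobNorm T ≤ 3 * (Real.sqrt k * opNorm E) := hfinal
    _ ≤ 3 * (Real.sqrt k * opNorm E + frobNorm E) := by
        have : 0 ≤ frobNorm E := hfE0
        linarith
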